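/- Let x, y, r > 0 and w ∈ ℕ. The double series h(z) = ∑_{n=1}^∞ ∑_{m=w}^∞ e^{rm} (x² n² + y² e^{rm})^{-z/2} converges absolutely for every complex z with Re(z) > 3, and defines a holomorphic function on {z : Re(z) > 3}. -/

import Mathlib

open Complex

/-- The `(n, m)` term `e^{rm} (x²n² + y²e^{rm})^{-z/2}` of `h(z)`, with
`n = p.1 + 1 ≥ 1` and `m = p.2 + w ≥ w`. -/
noncomputable def hTerm (x y r : ℝ) (w : ℕ) (z : ℂ) (p : ℕ × ℕ) : ℂ :=
  (Real.exp (r * ((p.2 : ℝ) + (w : ℝ))) : ℂ) *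
    ((x ^ 2 * ((p.1 : ℝ) + 1) ^ 2 + y ^ 2 * Real.exp (r * ((p.2 : ℝ) + (w : ℝ))) : ℝ) : ℂ)
      ^ (-z / 2)

private lemma bound_aux {x y n' E a b s : ℝ} (hx : 0 < x) (hy : 0 < y) (hn' : 0 < n')
    (hE : 0 < E) (ha : 0 < a) (hb : 0 < b) (hab : a + b = s / 2) :
    E * (x ^ 2 * n' ^ 2 + y ^ 2 * E) ^ (-s / 2)
      ≤ (x ^ 2) ^ (-a) * (y ^ 2) ^ (-b) * (n' ^ (-(2 * a)) * E ^ (1 - b)) := by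
  have hBpos : 0 < x ^ 2 * n' ^ 2 + y ^ 2 * E := by positivity
  have hle1 : x ^ 2 * n' ^ 2 ≤ x ^ 2 * n' ^ 2 + y ^ 2 * E := by nlinarith
  have hle2 : y ^ 2 * E ≤ x ^ 2 * n' ^ 2 + y ^ 2 * E := by nlinarith
  have h1 : (x ^ 2 * n' ^ 2) ^ a ≤ (x ^ 2 * n' ^ 2 + y ^ 2 * E) ^ a :=
    Real.rpow_le_rpow (by positivity) hle1 ha.le
  have h2 : (y ^ 2 * E) ^ b ≤ (x ^ 2 * n' ^ 2 + y ^ 2 * E) ^ b :=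
    Real.rpow_le_rpow (by positivity) hle2 hb.le
  have h3 : (x ^ 2 * n' ^ 2) ^ a * (y ^ 2 * E) ^ b
      ≤ (x ^ 2 * n' ^ 2 + y ^ 2 * E) ^ (s / 2) := by
    have hsplit : (x ^ 2 * n' ^ 2 + y ^ 2 * E) ^ (s / 2)
        = (x ^ 2 * n' ^ 2 + y ^ 2 * E) ^ a * (x ^ 2 * n' ^ 2 + y ^ 2 * E) ^ b := by
      rw [← Real.rpow_add hBpos, hab]
    rw [hsplit]
    exact mul_le_mul h1 h2 (by positivity) (by positivity)
  have hexpand : (x ^ 2 * n' ^ 2) ^ a * (y ^ 2 * E) ^ b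
      = (x ^ 2) ^ a * n' ^ (2 * a) * ((y ^ 2) ^ b * E ^ b) := by
    rw [Real.mul_rpow (by positivity) (by positivity),
      Real.mul_rpow (by positivity) hE.le]
    congr 2
    rw [← Real.rpow_natCast n' 2, ← Real.rpow_mul hn'.le]
    norm_num
  have hBrw : (x ^ 2 * n' ^ 2 + y ^ 2 * E) ^ (-s / 2)
      = ((x ^ 2 * n' ^ 2 + y ^ 2 * E) ^ (s / 2))⁻¹ := by
    rw [← Real.rpow_neg hBpos.le]
    ring_nf
  rw [hBrw]
  have hinv : ((x ^ 2 * n' ^ 2 + y ^ 2 * E) ^ (s / 2))⁻¹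
      ≤ ((x ^ 2 * n' ^ 2) ^ a * (y ^ 2 * E) ^ b)⁻¹ :=
    inv_anti₀ (by positivity) h3
  calc E * ((x ^ 2 * n' ^ 2 + y ^ 2 * E) ^ (s / 2))⁻¹
      ≤ E * ((x ^ 2 * n' ^ 2) ^ a * (y ^ 2 * E) ^ b)⁻¹ :=
        mul_le_mul_of_nonneg_left hinv hE.le
    _ = (x ^ 2) ^ (-a) * (y ^ 2) ^ (-b) * (n' ^ (-(2 * a)) * E ^ (1 - b)) := by
        rw [hexpand, Real.rpow_neg (by positivity : (0:ℝ) ≤ x ^ 2),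
          Real.rpow_neg (by positivity : (0:ℝ) ≤ y ^ 2),
          Real.rpow_neg hn'.le, Real.rpow_sub hE, Real.rpow_one]
        field_simp

private lemma summable_aux (x y r : ℝ) (hx : 0 < x) (hy : 0 < y) (hr : 0 < r) (w : ℕ)
    {s : ℝ} (hs : 3 < s) :
    Summable (fun p : ℕ × ℕ =>
      Real.exp (r * ((p.2 : ℝ) + (w : ℝ))) *
        (x ^ 2 * ((p.1 : ℝ) + 1) ^ 2 + y ^ 2 * Real.exp (r * ((p.2 : ℝ) + (w : ℝ)))) ^ (-s / 2)) := by
  obtain ⟨a, b, ha, hb, hab⟩ : ∃ a b : ℝ, 1 / 2 < a ∧ 1 < b ∧ a + b = s / 2 :=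
    ⟨s / 4 - 1 / 4, s / 4 + 1 / 4, by linarith, by linarith, by ring⟩
  have hf : Summable (fun n : ℕ => ((n : ℝ) + 1) ^ (-(2 * a))) := by
    have h0 : Summable (fun n : ℕ => ((n : ℝ)) ^ (-(2 * a))) :=
      Real.summable_nat_rpow.mpr (by linarith)
    have := (summable_nat_add_iff 1).mpr h0
    simpa using this
  have hg : Summable (fun m : ℕ => Real.exp (r * ((m : ℝ) + (w : ℝ)) * (1 - b))) := by
    have hratio : Real.exp (r * (1 - b)) < 1 := by
      rw [Real.exp_lt_one_iff]
      nlinarith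
    have hgeo : Summable (fun m : ℕ => (Real.exp (r * (1 - b))) ^ m) :=
      summable_geometric_of_lt_one (Real.exp_nonneg _) hratio
    have := hgeo.mul_left (Real.exp (r * (w : ℝ) * (1 - b)))
    refine this.congr fun m => ?_
    rw [← Real.exp_nat_mul, ← Real.exp_add]
    ring_nf
  have hfg : Summable (fun p : ℕ × ℕ =>
      ((p.1 : ℝ) + 1) ^ (-(2 * a)) * Real.exp (r * ((p.2 : ℝ) + (w : ℝ)) * (1 - b))) :=
    hf.mul_of_nonneg hg (fun n => Real.rpow_nonneg (by positivity) _)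
      (fun m => Real.exp_nonneg _)
  refine Summable.of_nonneg_of_le (fun p => by positivity) (fun p => ?_)
    (hfg.mul_left ((x ^ 2) ^ (-a) * (y ^ 2) ^ (-b)))
  obtain ⟨n, m⟩ := p
  have key := bound_aux (n' := (n : ℝ) + 1) (E := Real.exp (r * ((m : ℝ) + (w : ℝ))))
    hx hy (by positivity) (Real.exp_pos _) (by linarith) (by linarith) hab
  rw [← Real.exp_mul] at key
  simpa [mul_assoc] using key

private lemma norm_hTerm (x y r : ℝ) (hx : 0 < x) (hy : 0 < y) (w : ℕ) (z : ℂ) (p : ℕ × ℕ) :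
    ‖hTerm x y r w z p‖ = Real.exp (r * ((p.2 : ℝ) + (w : ℝ))) *
      (x ^ 2 * ((p.1 : ℝ) + 1) ^ 2 + y ^ 2 * Real.exp (r * ((p.2 : ℝ) + (w : ℝ)))) ^ (-z.re / 2) := by
  have hBpos : 0 < x ^ 2 * ((p.1 : ℝ) + 1) ^ 2 + y ^ 2 * Real.exp (r * ((p.2 : ℝ) + (w : ℝ))) := by
    positivity
  rw [hTerm, norm_mul, Complex.norm_real, Real.norm_eq_abs,
    abs_of_pos (Real.exp_pos _), Complex.norm_cpow_eq_rpow_re_of_pos hBpos]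
  congr 2
  simp [Complex.div_re]

theorem stmt7 (x y r : ℝ) (hx : 0 < x) (hy : 0 < y) (hr : 0 < r) (w : ℕ) :
    (∀ z : ℂ, 3 < z.re → Summable (fun p : ℕ × ℕ => ‖hTerm x y r w z p‖)) ∧
    DifferentiableOn ℂ (fun z => ∑' p : ℕ × ℕ, hTerm x y r w z p) {z : ℂ | 3 < z.re} := by
  have hsum : ∀ z : ℂ, 3 < z.re → Summable (fun p : ℕ × ℕ => ‖hTerm x y r w z p‖) := by
    intro z hz
    have hneg : -z.re / 2 = -(z.re) / 2 := by ring
    refine (summable_aux x y r hx hy hr w hz).congr fun p => ?_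
    exact (norm_hTerm x y r hx hy w z p).symm
  refine ⟨hsum, fun z₀ hz₀ => ?_⟩
  simp only [Set.mem_setOf_eq] at hz₀
  obtain ⟨s₀, s₁, hs₀3, hs₀z, hzs₁⟩ : ∃ s₀ s₁ : ℝ, 3 < s₀ ∧ s₀ < z₀.re ∧ z₀.re < s₁ :=
    ⟨(3 + z₀.re) / 2, z₀.re + 1, by linarith, by linarith, by linarith⟩
  have hU : IsOpen {z : ℂ | s₀ < z.re ∧ z.re < s₁} :=
    (isOpen_lt continuous_const Complex.continuous_re).inter
      (isOpen_lt Complex.continuous_re continuous_const)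
  have hmem : z₀ ∈ {z : ℂ | s₀ < z.re ∧ z.re < s₁} := ⟨hs₀z, hzs₁⟩
  have hdiffterm : ∀ p : ℕ × ℕ, DifferentiableOn ℂ (fun z => hTerm x y r w z p)
      {z : ℂ | s₀ < z.re ∧ z.re < s₁} := by
    intro p
    have hBpos : 0 < x ^ 2 * ((p.1 : ℝ) + 1) ^ 2 + y ^ 2 * Real.exp (r * ((p.2 : ℝ) + (w : ℝ))) := by
      positivity
    refine Differentiable.differentiableOn ?_
    refine (differentiable_const _).mul ?_
    refine Differentiable.const_cpow ?_ (Or.inl ?_)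
    · exact differentiable_id.neg.div_const 2
    · exact_mod_cast hBpos.ne'
  set K : ℝ := max 1 ((x ^ 2 + y ^ 2) ^ ((s₀ - s₁) / 2)) with hK
  have hcpos : (0 : ℝ) < x ^ 2 + y ^ 2 := by positivity
  have hbound : ∀ (p : ℕ × ℕ) (z : ℂ), z ∈ {z : ℂ | s₀ < z.re ∧ z.re < s₁} →
      ‖hTerm x y r w z p‖ ≤ K * (Real.exp (r * ((p.2 : ℝ) + (w : ℝ))) *
        (x ^ 2 * ((p.1 : ℝ) + 1) ^ 2 + y ^ 2 * Real.exp (r * ((p.2 : ℝ) + (w : ℝ)))) ^ (-s₀ / 2)) := by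
    rintro p z ⟨hz1, hz2⟩
    have hBpos : 0 < x ^ 2 * ((p.1 : ℝ) + 1) ^ 2 + y ^ 2 * Real.exp (r * ((p.2 : ℝ) + (w : ℝ))) := by
      positivity
    have hcB : x ^ 2 + y ^ 2
        ≤ x ^ 2 * ((p.1 : ℝ) + 1) ^ 2 + y ^ 2 * Real.exp (r * ((p.2 : ℝ) + (w : ℝ))) := by
      have hn0 : (0 : ℝ) ≤ (p.1 : ℝ) := Nat.cast_nonneg _
      have hE1 : (1 : ℝ) ≤ Real.exp (r * ((p.2 : ℝ) + (w : ℝ))) :=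
        Real.one_le_exp (by positivity)
      have h1 : x ^ 2 ≤ x ^ 2 * ((p.1 : ℝ) + 1) ^ 2 :=
        le_mul_of_one_le_right (by positivity) (by nlinarith)
      have h2 : y ^ 2 ≤ y ^ 2 * Real.exp (r * ((p.2 : ℝ) + (w : ℝ))) :=
        le_mul_of_one_le_right (by positivity) hE1
      linarith
    rw [norm_hTerm x y r hx hy w z p]
    have hrpow : (x ^ 2 * ((p.1 : ℝ) + 1) ^ 2 + y ^ 2 * Real.exp (r * ((p.2 : ℝ) + (w : ℝ)))) ^ (-z.re / 2)
        ≤ K * (x ^ 2 * ((p.1 : ℝ) + 1) ^ 2 + y ^ 2 * Real.exp (r * ((p.2 : ℝ) + (w : ℝ)))) ^ (-s₀ / 2) := by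
      have hsplit : (x ^ 2 * ((p.1 : ℝ) + 1) ^ 2 + y ^ 2 * Real.exp (r * ((p.2 : ℝ) + (w : ℝ)))) ^ (-z.re / 2)
          = (x ^ 2 * ((p.1 : ℝ) + 1) ^ 2 + y ^ 2 * Real.exp (r * ((p.2 : ℝ) + (w : ℝ)))) ^ ((s₀ - z.re) / 2)
            * (x ^ 2 * ((p.1 : ℝ) + 1) ^ 2 + y ^ 2 * Real.exp (r * ((p.2 : ℝ) + (w : ℝ)))) ^ (-s₀ / 2) := by
        rw [← Real.rpow_add hBpos]
        ring_nf
      rw [hsplit]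
      have hfac : (x ^ 2 * ((p.1 : ℝ) + 1) ^ 2 + y ^ 2 * Real.exp (r * ((p.2 : ℝ) + (w : ℝ)))) ^ ((s₀ - z.re) / 2) ≤ K := by
        rcases le_or_gt 1 (x ^ 2 * ((p.1 : ℝ) + 1) ^ 2 + y ^ 2 * Real.exp (r * ((p.2 : ℝ) + (w : ℝ)))) with hB1 | hB1
        · refine le_trans (Real.rpow_le_one_of_one_le_of_nonpos hB1 (by linarith)) (le_max_left _ _)
        · refine le_trans (le_trans
            (Real.rpow_le_rpow_of_exponent_ge hBpos hB1.le (by linarith : (s₀ - s₁) / 2 ≤ (s₀ - z.re) / 2))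
            (Real.rpow_le_rpow_of_nonpos hcpos hcB (by linarith))) (le_max_right _ _)
      exact mul_le_mul_of_nonneg_right hfac (Real.rpow_nonneg hBpos.le _)
    calc Real.exp (r * ((p.2 : ℝ) + (w : ℝ))) *
          (x ^ 2 * ((p.1 : ℝ) + 1) ^ 2 + y ^ 2 * Real.exp (r * ((p.2 : ℝ) + (w : ℝ)))) ^ (-z.re / 2)
        ≤ Real.exp (r * ((p.2 : ℝ) + (w : ℝ))) *
          (K * (x ^ 2 * ((p.1 : ℝ) + 1) ^ 2 + y ^ 2 * Real.exp (r * ((p.2 : ℝ) + (w : ℝ)))) ^ (-s₀ / 2)) :=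
          mul_le_mul_of_nonneg_left hrpow (Real.exp_nonneg _)
      _ = K * (Real.exp (r * ((p.2 : ℝ) + (w : ℝ))) *
          (x ^ 2 * ((p.1 : ℝ) + 1) ^ 2 + y ^ 2 * Real.exp (r * ((p.2 : ℝ) + (w : ℝ)))) ^ (-s₀ / 2)) := by
          ring
  have hu : Summable (fun p : ℕ × ℕ => K * (Real.exp (r * ((p.2 : ℝ) + (w : ℝ))) *
      (x ^ 2 * ((p.1 : ℝ) + 1) ^ 2 + y ^ 2 * Real.exp (r * ((p.2 : ℝ) + (w : ℝ)))) ^ (-s₀ / 2))) :=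
    (summable_aux x y r hx hy hr w hs₀3).mul_left K
  have hdOn := differentiableOn_tsum_of_summable_norm hu hdiffterm hU hbound
  exact (hdOn.differentiableAt (hU.mem_nhds hmem)).differentiableWithinAt
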